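/- arXiv:0902.2563 — 6 statements merged into one kernel-verified Lean document; each statement's English description precedes it below -/
import Mathlib

section
/- Let E be a real separable Banach space, μ a centered Gaussian measure on E, and (f_j)_{j≥1} a sequence in E that is admissible for μ. Then ‖f_j‖ → 0 as j → ∞. -/
open MeasureTheory ProbabilityTheory Filter Topology

/-- A centered Gaussian measure on a real Banach space. -/
def IsCenteredGaussianMeasure {E : Type*} [NormedAddCommGroup E] [NormedSpace ℝ E]
    [MeasurableSpace E] (μ : Measure E) : Prop :=
  IsProbabilityMeasure μ ∧ ∀ u : E →L[ℝ] ℝ, ∃ v : NNReal, μ.map u = gaussianReal 0 v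

/-- A sequence `f` in `E` is admissible for `μ` (with respect to the i.i.d. standard normal
sequence `ξ` on `(Ω, P)`) if the partial sums `∑_{j<n} ξ_j f_j` converge almost surely in `E`
and the law of the limit is `μ`. -/
def Admissible {E : Type*} [NormedAddCommGroup E] [NormedSpace ℝ E] [MeasurableSpace E]
    {Ω : Type*} [MeasurableSpace Ω] (P : Measure Ω) (ξ : ℕ → Ω → ℝ)
    (μ : Measure E) (f : ℕ → E) : Prop :=
  ∃ X : Ω → E, AEMeasurable X P ∧
    (∀ᵐ ω ∂P, Tendsto (fun n => ∑ j ∈ Finset.range n, ξ j ω • f j) atTop (𝓝 (X ω))) ∧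
    P.map X = μ

theorem stmt2 {E : Type*} [NormedAddCommGroup E] [NormedSpace ℝ E] [CompleteSpace E]
    [TopologicalSpace.SeparableSpace E] [MeasurableSpace E] [BorelSpace E]
    (μ : Measure E) (hμ : IsCenteredGaussianMeasure μ)
    {Ω : Type*} [MeasurableSpace Ω] (P : Measure Ω) [IsProbabilityMeasure P]
    (ξ : ℕ → Ω → ℝ) (hmeas : ∀ j, Measurable (ξ j))
    (hindep : iIndepFun ξ P)
    (hdist : ∀ j, P.map (ξ j) = gaussianReal 0 1)
    (f : ℕ → E) (hf : Admissible P ξ μ f) :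
    Tendsto (fun j => ‖f j‖) atTop (𝓝 0) := by
  obtain ⟨X, hX, hconv, hlaw⟩ := hf
  by_contra hcon
  -- extract ε > 0 with ‖f j‖ ≥ ε frequently
  rw [Metric.tendsto_atTop] at hcon
  push_neg at hcon
  obtain ⟨ε, hε, hfreq⟩ := hcon
  have hfreq' : ∃ᶠ j in atTop, ε ≤ ‖f j‖ := by
    rw [frequently_atTop]
    intro N
    obtain ⟨n, hn, hd⟩ := hfreq N
    refine ⟨n, hn, ?_⟩
    rw [Real.dist_eq, sub_zero, abs_of_nonneg (norm_nonneg _)] at hd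
    exact hd
  -- the basic event on ℝ
  set B : Set ℝ := {x : ℝ | 1 ≤ |x|} with hB
  have hBm : MeasurableSet B := by
    have : B = Set.Iic (-1) ∪ Set.Ici 1 := by
      ext x
      simp [hB, le_abs]
      constructor
      · rintro (h | h)
        · right; exact h
        · left; linarith
      · rintro (h | h)
        · right; linarith
        · left; exact h
    rw [this]
    exact measurableSet_Iic.union measurableSet_Ici
  have hp : (0 : ENNReal) < gaussianReal 0 1 B := by
    rw [pos_iff_ne_zero]
    intro h0
    have := gaussianReal_absolutelyContinuous' 0 (v := 1) one_ne_zero h0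
    have hsub : Set.Ici (1 : ℝ) ⊆ B := fun x hx => by
      simp only [hB, Set.mem_setOf_eq]
      exact le_trans hx (le_abs_self x)
    have : volume (Set.Ici (1 : ℝ)) = 0 := measure_mono_null hsub this
    simp [Real.volume_Ici] at this
  set p : ENNReal := gaussianReal 0 1 B with hpdef
  -- sets
  set Bs : ℕ → Set ℝ := fun j => if ε ≤ ‖f j‖ then B else ∅ with hBs
  have hBsm : ∀ j, MeasurableSet (Bs j) := fun j => by
    by_cases h : ε ≤ ‖f j‖ <;> simp [hBs, h, hBm]
  set s : ℕ → Set Ω := fun j => ξ j ⁻¹' Bs j with hs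
  have hsm : ∀ j, MeasurableSet (s j) := fun j => (hmeas j) (hBsm j)
  have hsindep : iIndepSet s P := by
    rw [iIndepSet_iff_meas_biInter hsm]
    intro S
    exact hindep.measure_inter_preimage_eq_mul S (fun i _ => hBsm i)
  have hPs : ∀ j, P (s j) = if ε ≤ ‖f j‖ then p else 0 := by
    intro j
    by_cases h : ε ≤ ‖f j‖
    · simp only [hs, hBs, h, if_true]
      rw [← Measure.map_apply (hmeas j) hBm, hdist j]
    · simp [hs, hBs, h]
  have hsum : (∑' j, P (s j)) = ⊤ := by
    by_contra hne
    have htend := ENNReal.tendsto_atTop_zero_of_tsum_ne_top hne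
    have : ∀ᶠ j in atTop, P (s j) < p := htend.eventually_lt_const hp
    obtain ⟨j, hj1, hj2⟩ := (hfreq'.and_eventually this).exists
    rw [hPs j, if_pos hj1] at hj2
    exact lt_irrefl _ hj2
  have hlimsup : P (limsup s atTop) = 1 := measure_limsup_eq_one hsm hsindep hsum
  have hae : ∀ᵐ ω ∂P, ω ∈ limsup s atTop := by
    rw [ae_iff]
    have hms : MeasurableSet (limsup s atTop) := MeasurableSet.measurableSet_limsup hsm
    have := prob_compl_eq_zero_iff (μ := P) hms
    rw [← Set.compl_setOf]
    simpa [Set.compl_setOf] using (this.2 hlimsup)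
  obtain ⟨ω, hω1, hω2⟩ := (hae.and hconv).exists
  -- the terms tend to 0 for this ω
  have hterm : Tendsto (fun j => ξ j ω • f j) atTop (𝓝 0) := by
    have h1 : Tendsto (fun n => ∑ j ∈ Finset.range (n + 1), ξ j ω • f j) atTop (𝓝 (X ω)) :=
      hω2.comp (tendsto_add_atTop_nat 1)
    have := h1.sub hω2
    simp only [sub_self] at this
    convert this using 2 with n
    rw [Finset.sum_range_succ]
    abel
  -- but frequently ‖ξ j ω • f j‖ ≥ ε
  have hfr : ∃ᶠ j in atTop, ω ∈ s j := mem_limsup_iff_frequently_mem.mp hω1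
  have hfr2 : ∃ᶠ j in atTop, ε ≤ ‖ξ j ω • f j‖ := by
    refine hfr.mono fun j hj => ?_
    by_cases h : ε ≤ ‖f j‖
    · simp only [hs, hBs, h, if_true, Set.mem_preimage, hB, Set.mem_setOf_eq] at hj
      rw [norm_smul, Real.norm_eq_abs]
      calc ε ≤ ‖f j‖ := h
        _ = 1 * ‖f j‖ := (one_mul _).symm
        _ ≤ |ξ j ω| * ‖f j‖ := by
            exact mul_le_mul_of_nonneg_right hj (norm_nonneg _)
    · simp [hs, hBs, h] at hj
  have hn := hterm.norm
  rw [norm_zero] at hn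
  have := hn.eventually_lt_const hε
  obtain ⟨j, h1, h2⟩ := (hfr2.and_eventually this).exists
  exact absurd h1 (not_le.mpr h2)
end

section
/- Let (f_j)_{j≥1} be a sequence in a real separable Hilbert space K such that for every k ∈ K, ‖∑_{j=1}^n ⟨k, f_j⟩ f_j‖ → ‖k‖ as n → ∞. Then for every k ∈ K, ∑_{j=1}^∞ ⟨k, f_j⟩² ≤ ‖k‖². -/
open Filter Topology RealInnerProductSpace

theorem stmt4 {K : Type*} [NormedAddCommGroup K] [InnerProductSpace ℝ K] [CompleteSpace K]
    [TopologicalSpace.SeparableSpace K] (f : ℕ → K)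
    (h : ∀ k : K, Tendsto (fun n => ‖∑ j ∈ Finset.range n, ⟪k, f j⟫ • f j‖) atTop (𝓝 ‖k‖)) :
    ∀ k : K, Summable (fun j => ⟪k, f j⟫ ^ 2) ∧ ∑' j, ⟪k, f j⟫ ^ 2 ≤ ‖k‖ ^ 2 := by
  intro k
  have key : ∀ n, ∑ j ∈ Finset.range n, ⟪k, f j⟫ ^ 2 ≤ ‖k‖ ^ 2 := by
    intro n
    have hlim : Tendsto (fun m => ‖k‖ * ‖∑ j ∈ Finset.range m, ⟪k, f j⟫ • f j‖)
        atTop (𝓝 (‖k‖ * ‖k‖)) := (h k).const_mul _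
    have hbound : ∀ᶠ m in atTop, ∑ j ∈ Finset.range n, ⟪k, f j⟫ ^ 2 ≤
        ‖k‖ * ‖∑ j ∈ Finset.range m, ⟪k, f j⟫ • f j‖ := by
      filter_upwards [eventually_ge_atTop n] with m hm
      calc ∑ j ∈ Finset.range n, ⟪k, f j⟫ ^ 2
          ≤ ∑ j ∈ Finset.range m, ⟪k, f j⟫ ^ 2 :=
            Finset.sum_le_sum_of_subset_of_nonneg (Finset.range_subset_range.2 hm)
              (fun j _ _ => sq_nonneg _)
        _ = ⟪k, ∑ j ∈ Finset.range m, ⟪k, f j⟫ • f j⟫ := by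
            rw [inner_sum]; simp [real_inner_smul_right, sq]
        _ ≤ ‖k‖ * ‖∑ j ∈ Finset.range m, ⟪k, f j⟫ • f j‖ := real_inner_le_norm _ _
    have := ge_of_tendsto hlim hbound
    calc ∑ j ∈ Finset.range n, ⟪k, f j⟫ ^ 2 ≤ ‖k‖ * ‖k‖ := this
      _ = ‖k‖ ^ 2 := (sq ‖k‖).symm
  exact ⟨summable_of_sum_range_le (fun j => sq_nonneg _) key,
    Summable.tsum_le_of_sum_range_le (summable_of_sum_range_le (fun j => sq_nonneg _) key) key⟩
end

section
/- Let I be a compact metric space, K a real separable Hilbert space, and g : I → K a map such that (s, t) ↦ ⟨g_s, g_t⟩ is continuous on I × I. Then sup_{t ∈ I} ‖g_t‖ < ∞; for every k ∈ K the function t ↦ ⟨g_t, k⟩ is continuous on I; the map S : K → C(I), S(k)(t) := ⟨g_t, k⟩, is a continuous linear operator with ‖S(k)‖_∞ ≤ (sup_{t ∈ I} ‖g_t‖) · ‖k‖ for all k ∈ K; and the orthogonal complement of the kernel of S equals the closed linear span of {g_t : t ∈ I} in K. -/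
open Filter Topology RealInnerProductSpace

theorem stmt11 {I : Type*} [MetricSpace I] [CompactSpace I]
    {K : Type*} [NormedAddCommGroup K] [InnerProductSpace ℝ K] [CompleteSpace K]
    [TopologicalSpace.SeparableSpace K]
    (g : I → K) (hg : Continuous fun p : I × I => ⟪g p.1, g p.2⟫) :
    (∃ M : ℝ, ∀ t, ‖g t‖ ≤ M) ∧
    (∀ k : K, Continuous fun t => ⟪g t, k⟫) ∧
    (∃ S : K →L[ℝ] C(I, ℝ),
      (∀ (k : K) (t : I), S k t = ⟪g t, k⟫) ∧
      (∀ k : K, ‖S k‖ ≤ (⨆ t, ‖g t‖) * ‖k‖) ∧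
      (LinearMap.ker (S : K →ₗ[ℝ] C(I, ℝ)))ᗮ = (Submodule.span ℝ (Set.range g)).topologicalClosure) := by
  -- g is continuous
  have hgc : Continuous g := by
    rw [continuous_iff_continuousAt]
    intro t₀
    have h1 : Tendsto (fun s => ‖g s - g t₀‖ ^ 2) (𝓝 t₀) (𝓝 0) := by
      have heq : (fun s => ‖g s - g t₀‖ ^ 2) =
          fun s => ⟪g s, g s⟫ - 2 * ⟪g s, g t₀⟫ + ⟪g t₀, g t₀⟫ := by
        funext s
        rw [@norm_sub_sq_real, ← real_inner_self_eq_norm_sq, ← real_inner_self_eq_norm_sq]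
      rw [heq]
      have hc : Continuous fun s => ⟪g s, g s⟫ - 2 * ⟪g s, g t₀⟫ + ⟪g t₀, g t₀⟫ := by
        have h1 : Continuous fun s => ⟪g s, g s⟫ :=
          hg.comp (continuous_id.prodMk continuous_id)
        have h2 : Continuous fun s => ⟪g s, g t₀⟫ :=
          hg.comp (continuous_id.prodMk continuous_const)
        fun_prop
      convert hc.tendsto t₀ using 2
      ring
    have h2 : Tendsto (fun s => ‖g s - g t₀‖) (𝓝 t₀) (𝓝 0) := by
      have := h1.sqrt
      simpa [Real.sqrt_sq (norm_nonneg _)] using this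
    exact tendsto_iff_norm_sub_tendsto_zero.2 h2
  have hbdd : BddAbove (Set.range fun t => ‖g t‖) :=
    (isCompact_range hgc.norm).bddAbove
  have hMle : ∀ t, ‖g t‖ ≤ ⨆ t, ‖g t‖ := fun t => le_ciSup hbdd t
  have hcont : ∀ k : K, Continuous fun t => ⟪g t, k⟫ := fun k =>
    hgc.inner continuous_const
  refine ⟨⟨⨆ t, ‖g t‖, hMle⟩, hcont, ?_⟩
  -- the linear map
  set ℓ : K →ₗ[ℝ] C(I, ℝ) :=
    { toFun := fun k => ⟨fun t => ⟪g t, k⟫, hcont k⟩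
      map_add' := fun x y => by ext t; simp [inner_add_right]
      map_smul' := fun c x => by ext t; simp [inner_smul_right] } with hℓ
  have hMnn : 0 ≤ ⨆ t, ‖g t‖ := Real.iSup_nonneg fun t => norm_nonneg _
  have hbound : ∀ k : K, ‖ℓ k‖ ≤ (⨆ t, ‖g t‖) * ‖k‖ := by
    intro k
    rw [ContinuousMap.norm_le _ (by positivity)]
    intro t
    calc ‖⟪g t, k⟫‖ ≤ ‖g t‖ * ‖k‖ := norm_inner_le_norm _ _
      _ ≤ (⨆ t, ‖g t‖) * ‖k‖ := by gcongr; exact hMle t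
  set S : K →L[ℝ] C(I, ℝ) := ℓ.mkContinuous _ hbound with hS
  refine ⟨S, fun k t => rfl, hbound, ?_⟩
  have hker : LinearMap.ker (S : K →ₗ[ℝ] C(I, ℝ)) = (Submodule.span ℝ (Set.range g))ᗮ := by
    ext k
    simp only [LinearMap.mem_ker, Submodule.mem_orthogonal]
    constructor
    · intro h u hu
      induction hu using Submodule.span_induction with
      | mem x hx =>
        obtain ⟨t, rfl⟩ := hx
        have := DFunLike.congr_fun h t
        exact this
      | zero => simp
      | add x y _ _ hx hy => rw [inner_add_left, hx, hy]; ring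
      | smul c x _ hx => rw [inner_smul_left, hx]; simp
    · intro h
      ext t
      have := h (g t) (Submodule.subset_span ⟨t, rfl⟩)
      exact this
  rw [hker, Submodule.orthogonal_orthogonal_eq_closure]
end

section
/- For all T > 0 and s, t ∈ [0, T], the series ∑_{j=1}^∞ (2T / (π²(j − 1/2)²)) · sin(π(j − 1/2)s/T) · sin(π(j − 1/2)t/T) converges with sum min(s, t). -/
open Filter Topology Real

-- Step 1: classical Fourier series ∑ cos(nθ)/n² = π²/6 − πθ/2 + θ²/4 on [0, 2π]
lemma cosSum {θ : ℝ} (hθ : θ ∈ Set.Icc 0 (2 * π)) :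
    HasSum (fun n : ℕ => Real.cos (n * θ) / (n : ℝ) ^ 2)
      (π ^ 2 / 6 - π * θ / 2 + θ ^ 2 / 4) := by
  have hπ : (0:ℝ) < π := Real.pi_pos
  have hx : θ / (2 * π) ∈ Set.Icc (0:ℝ) 1 := by
    constructor
    · exact div_nonneg hθ.1 (by positivity)
    · rw [div_le_one (by positivity)]; exact hθ.2
  have h := hasSum_one_div_nat_pow_mul_cos (k := 1) one_ne_zero hx
  have hB : (Polynomial.map (algebraMap ℚ ℝ) (Polynomial.bernoulli (2 * 1))).eval (θ / (2*π))
      = (θ/(2*π))^2 - (θ/(2*π)) + 1/6 := by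
    simp [Polynomial.bernoulli, Finset.sum_range_succ, Polynomial.eval_finset_sum]
    norm_num [bernoulli]
    ring
  rw [hB] at h
  have h2 : HasSum (fun n : ℕ => 1 / (n:ℝ) ^ (2*1) * Real.cos (2 * π * n * (θ/(2*π))))
      (π ^ 2 / 6 - π * θ / 2 + θ ^ 2 / 4) := by
    convert h using 1
    field_simp
    ring
  convert h2 using 2 with n
  rw [show (2*1) = 2 from rfl, show 2*π*(n:ℝ)*(θ/(2*π)) = (n:ℝ)*θ from by
    field_simp]
  ring
-- Step 2: ∑_{j≥0} cos((j+1/2)y)/(j+1/2)² = π²/2 − πy/2 on [0,2π]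
lemma halfSum {y : ℝ} (hy : y ∈ Set.Icc 0 (2 * π)) :
    HasSum (fun j : ℕ => Real.cos (((j : ℝ) + 1 / 2) * y) / ((j : ℝ) + 1 / 2) ^ 2)
      (π ^ 2 / 2 - π * y / 2) := by
  have hπ : (0:ℝ) < π := Real.pi_pos
  set f : ℕ → ℝ := fun n => Real.cos (n * (y / 2)) / (n : ℝ) ^ 2 with hf_def
  have hy2 : y / 2 ∈ Set.Icc 0 (2 * π) := by
    constructor
    · linarith [hy.1]
    · linarith [hy.2]
  have hf : HasSum f (π ^ 2 / 6 - π * (y / 2) / 2 + (y / 2) ^ 2 / 4) := cosSum hy2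
  have he : HasSum (fun k : ℕ => f (2 * k)) ((π ^ 2 / 6 - π * y / 2 + y ^ 2 / 4) / 4) := by
    have := (cosSum hy).div_const 4
    convert this using 2 with k
    · rfl
    simp only [hf_def]
    push_cast
    rw [show (2*(k:ℝ)) * (y/2) = (k:ℝ)*y by ring, div_div]
    congr 1
    ring
  have hoS : Summable (fun k : ℕ => f (2 * k + 1)) :=
    hf.summable.comp_injective (fun a b hab => by omega)
  have hval : ∑' k, f (2 * k + 1)
      = (π ^ 2 / 6 - π * (y / 2) / 2 + (y / 2) ^ 2 / 4)
        - (π ^ 2 / 6 - π * y / 2 + y ^ 2 / 4) / 4 := by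
    have := tsum_even_add_odd he.summable hoS
    rw [he.tsum_eq, hf.tsum_eq] at this
    linarith
  have ho : HasSum (fun k : ℕ => f (2 * k + 1))
      ((π ^ 2 / 6 - π * (y / 2) / 2 + (y / 2) ^ 2 / 4)
        - (π ^ 2 / 6 - π * y / 2 + y ^ 2 / 4) / 4) := hval ▸ hoS.hasSum
  have h4 := ho.mul_left 4
  convert h4 using 1
  · rfl
  · funext j
    simp only [hf_def]
    push_cast
    rw [show (2*(j:ℝ)+1) * (y/2) = ((j:ℝ)+1/2)*y by ring,
      show ((j:ℝ)+1/2)^2 = (2*(j:ℝ)+1)^2/4 by ring,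
      div_div_eq_mul_div, mul_comm, mul_div_assoc]
  · ring
theorem stmt14 (T : ℝ) (hT : 0 < T) (s t : ℝ) (hs : s ∈ Set.Icc 0 T) (ht : t ∈ Set.Icc 0 T) :
    Tendsto
      (fun n : ℕ => ∑ j ∈ Finset.Icc 1 n,
        (2 * T / (π ^ 2 * ((j : ℝ) - 1 / 2) ^ 2)) *
          (Real.sin (π * ((j : ℝ) - 1 / 2) * s / T) *
            Real.sin (π * ((j : ℝ) - 1 / 2) * t / T)))
      atTop (𝓝 (min s t)) := by
  have hπ : (0:ℝ) < π := Real.pi_pos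
  set F : ℕ → ℝ := fun j =>
    (2 * T / (π ^ 2 * ((j : ℝ) - 1 / 2) ^ 2)) *
      (Real.sin (π * ((j : ℝ) - 1 / 2) * s / T) *
        Real.sin (π * ((j : ℝ) - 1 / 2) * t / T)) with hF
  set u : ℝ := π * |s - t| / T with hu
  set v : ℝ := π * (s + t) / T with hv
  have hu_mem : u ∈ Set.Icc 0 (2 * π) := by
    constructor
    · positivity
    · rw [hu, div_le_iff₀ hT]
      have h1 : |s - t| ≤ T := by
        rw [abs_sub_le_iff]; constructor <;> [linarith [ht.1, hs.2]; linarith [hs.1, ht.2]]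
      nlinarith
  have hv_mem : v ∈ Set.Icc 0 (2 * π) := by
    constructor
    · have : 0 ≤ s + t := by linarith [hs.1, ht.1]
      positivity
    · rw [hv, div_le_iff₀ hT]
      nlinarith [hs.2, ht.2]
  have hsum := ((halfSum hu_mem).sub (halfSum hv_mem)).mul_left (T / π ^ 2)
  have hval : T / π ^ 2 * (π ^ 2 / 2 - π * u / 2 - (π ^ 2 / 2 - π * v / 2)) = min s t := by
    rw [hu, hv]
    rcases le_total s t with h | h
    · rw [min_eq_left h, abs_of_nonpos (by linarith)]
      field_simp
      ring
    · rw [min_eq_right h, abs_of_nonneg (by linarith)]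
      field_simp
      ring
  rw [hval] at hsum
  have hterm : ∀ j : ℕ, T / π ^ 2 *
      (Real.cos (((j : ℝ) + 1 / 2) * u) / ((j : ℝ) + 1 / 2) ^ 2 -
        Real.cos (((j : ℝ) + 1 / 2) * v) / ((j : ℝ) + 1 / 2) ^ 2) = F (j + 1) := by
    intro j
    have hj : ((j : ℝ) + 1 - 1 / 2) = (j : ℝ) + 1 / 2 := by ring
    simp only [hF, Nat.cast_add, Nat.cast_one, hj]
    set c : ℝ := (j : ℝ) + 1 / 2 with hc
    have hc0 : c ≠ 0 := by positivity
    set A : ℝ := π * c * s / T with hA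
    set B : ℝ := π * c * t / T with hB
    have hsinsin : Real.sin A * Real.sin B = (Real.cos (A - B) - Real.cos (A + B)) / 2 := by
      rw [Real.cos_sub_cos]
      rw [show (A - B + (A + B)) / 2 = A by ring, show (A - B - (A + B)) / 2 = -B by ring,
        Real.sin_neg]
      ring
    have hcu : Real.cos (c * u) = Real.cos (A - B) := by
      rw [hu, hA, hB, show c * (π * |s - t| / T) = |π * c * (s - t) / T| by
        rw [abs_div, abs_mul, abs_mul, abs_of_nonneg hπ.le, abs_of_nonneg (by positivity : (0:ℝ) ≤ c),
          abs_of_nonneg hT.le]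
        ring, Real.cos_abs]
      congr 1
      ring
    have hcv : Real.cos (c * v) = Real.cos (A + B) := by
      congr 1
      rw [hv, hA, hB]
      field_simp
    rw [hcu, hcv, hsinsin]
    field_simp
  have hsum2 : HasSum (fun j : ℕ => F (j + 1)) (min s t) := by
    convert hsum using 2 with j
    · rfl
    exact (hterm j).symm
  have htends := hsum2.tendsto_sum_nat
  have key : ∀ n : ℕ, ∑ j ∈ Finset.Icc 1 n, F j = ∑ i ∈ Finset.range n, F (i + 1) := by
    intro n
    rw [← Finset.Ico_add_one_right_eq_Icc, Finset.sum_Ico_eq_sum_range]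
    simp [Nat.add_comm]
  simp only [key]
  exact htends
end

section
/- For all T > 0 and s, t ∈ [0, T], the series ∑_{j=1}^∞ (2T / (π² j²)) · sin(π j s/T) · sin(π j t/T) converges with sum min(s, t) − st/T. -/
open Filter Topology Real

lemma cos_series (x : ℝ) (hx : x ∈ Set.Icc (0:ℝ) 1) :
    HasSum (fun n : ℕ => 1 / (n : ℝ) ^ 2 * Real.cos (2 * π * n * x))
      (π ^ 2 * (x ^ 2 - x + 1 / 6)) := by
  have h := hasSum_one_div_nat_pow_mul_cos (k := 1) one_ne_zero hx
  have hb : (Polynomial.map (algebraMap ℚ ℝ) (Polynomial.bernoulli (2 * 1))).eval x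
      = x ^ 2 - x + 1 / 6 := by
    norm_num
    simp [Polynomial.bernoulli, Finset.sum_range_succ, bernoulli]
    ring
  rw [hb] at h
  norm_num [Nat.factorial] at h
  have e : ((2 * π) ^ 2 / 2 / 2 : ℝ) = π ^ 2 := by ring
  rw [e] at h
  simpa [one_div] using h

lemma key (T : ℝ) (hT : 0 < T) (s t : ℝ) (hs : s ∈ Set.Icc 0 T) (ht : t ∈ Set.Icc 0 T)
    (hst : s ≤ t) :
    HasSum (fun j : ℕ =>
        (2 * T / (π ^ 2 * (j : ℝ) ^ 2)) *
          (Real.sin (π * (j : ℝ) * s / T) * Real.sin (π * (j : ℝ) * t / T)))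
      (min s t - s * t / T) := by
  obtain ⟨hs0, hsT⟩ := hs
  obtain ⟨ht0, htT⟩ := ht
  have hx1 : (t - s) / (2 * T) ∈ Set.Icc (0:ℝ) 1 := by
    constructor
    · exact div_nonneg (by linarith) (by linarith)
    · rw [div_le_one (by linarith)]; linarith
  have hx2 : (s + t) / (2 * T) ∈ Set.Icc (0:ℝ) 1 := by
    constructor
    · exact div_nonneg (by linarith) (by linarith)
    · rw [div_le_one (by linarith)]; linarith
  have h1 := (cos_series _ hx1).mul_left (T / π ^ 2)
  have h2 := (cos_series _ hx2).mul_left (T / π ^ 2)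
  have h := h1.sub h2
  have hπ := Real.pi_ne_zero
  have hT' := hT.ne'
  convert h using 1
  · rfl
  · funext j
    have e1 : 2 * π * j * ((t - s) / (2 * T)) = π * j * t / T - π * j * s / T := by
      field_simp
    have e2 : 2 * π * j * ((s + t) / (2 * T)) = π * j * t / T + π * j * s / T := by
      field_simp; ring
    rw [e1, e2, Real.cos_sub, Real.cos_add]
    ring
  · rw [min_eq_left hst]
    field_simp
    ring

theorem stmt15 (T : ℝ) (hT : 0 < T) (s t : ℝ) (hs : s ∈ Set.Icc 0 T) (ht : t ∈ Set.Icc 0 T) :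
    Tendsto
      (fun n : ℕ => ∑ j ∈ Finset.Icc 1 n,
        (2 * T / (π ^ 2 * (j : ℝ) ^ 2)) *
          (Real.sin (π * (j : ℝ) * s / T) * Real.sin (π * (j : ℝ) * t / T)))
      atTop (𝓝 (min s t - s * t / T)) := by
  have key2 : HasSum (fun j : ℕ =>
        (2 * T / (π ^ 2 * (j : ℝ) ^ 2)) *
          (Real.sin (π * (j : ℝ) * s / T) * Real.sin (π * (j : ℝ) * t / T)))
      (min s t - s * t / T) := by
    rcases le_total s t with h | h
    · exact key T hT s t hs ht h
    · have := key T hT t s ht hs h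
      rw [min_comm, mul_comm s t]
      convert this using 2 with j
      ring
  have h := key2.tendsto_sum_nat
  have heq : ∀ n : ℕ, ∑ j ∈ Finset.Icc 1 n,
        (2 * T / (π ^ 2 * (j : ℝ) ^ 2)) *
          (Real.sin (π * (j : ℝ) * s / T) * Real.sin (π * (j : ℝ) * t / T))
      = ∑ j ∈ Finset.range (n + 1),
        (2 * T / (π ^ 2 * (j : ℝ) ^ 2)) *
          (Real.sin (π * (j : ℝ) * s / T) * Real.sin (π * (j : ℝ) * t / T)) := by
    intro n
    rw [show Finset.Icc 1 n = Finset.Ico 1 (n + 1) by rw [Finset.Ico_add_one_right_eq_Icc],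
      Finset.sum_Ico_eq_sum_range, Finset.sum_range_succ']
    norm_num
    exact Finset.sum_congr rfl fun x _ => by rw [add_comm (1:ℝ) (x:ℝ)]
  simp only [heq]
  exact h.comp (tendsto_add_atTop_nat 1)
end

section
/- Let α > 0, T > 0 and ρ ∈ (0, 1]. Define β_0(ρ) = (1/(2T)) ∫_{−T}^{T} e^{−α|t|^ρ} dt and β_j(ρ) = (1/T) ∫_{−T}^{T} e^{−α|t|^ρ} cos(π j t/T) dt for j ≥ 1. Then β_j(ρ) > 0 for every j ≥ 0. -/
open Filter Topology Real MeasureTheory Set intervalIntegral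

lemma sum_decomp (n : ℕ) (c : ℕ → ℝ) :
    ∑ k ∈ Finset.range (n+2), (-1:ℝ)^k * c k
      = (∑ k ∈ Finset.range n, (-1:ℝ)^k * c (k+2)) + (c 0 - c 1) := by
  rw [Finset.sum_range_succ' (fun k => (-1:ℝ)^k * c k) (n+1),
      Finset.sum_range_succ' (fun k => (-1:ℝ)^(k+1) * c (k+1)) n]
  have : ∀ k ∈ Finset.range n, (-1:ℝ)^(k+1+1) * c (k+1+1) = (-1:ℝ)^k * c (k+2) := by
    intro k _
    have : (-1:ℝ)^(k+1+1) = (-1:ℝ)^k := by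
      rw [pow_add, pow_add]; ring
    rw [this]
  rw [Finset.sum_congr rfl this]
  norm_num
  ring

lemma altSum_nonneg : ∀ (j : ℕ) (c : ℕ → ℝ), (∀ k, k + 1 ≤ j → 0 ≤ c k) →
    (∀ k, k + 2 ≤ j → c (k+1) ≤ c k) →
    0 ≤ ∑ k ∈ Finset.range j, (-1:ℝ)^k * c k := by
  intro j
  induction j using Nat.strong_induction_on with
  | _ j ih =>
    match j with
    | 0 => intro c _ _; simp
    | 1 => intro c h1 _; simpa using h1 0 le_rfl
    | (n+2) =>
      intro c h1 h2
      rw [sum_decomp]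
      have hA := ih n (by omega) (fun k => c (k+2))
        (fun k hk => h1 (k+2) (by omega)) (fun k hk => h2 (k+2) (by omega))
      have hB := h2 0 (by omega)
      linarith

lemma altSum_pos (j : ℕ) (hj : 1 ≤ j) (c : ℕ → ℝ) (h1 : ∀ k, k + 1 ≤ j → 0 < c k)
    (h2 : ∀ k, k + 2 ≤ j → c (k+1) < c k) :
    0 < ∑ k ∈ Finset.range j, (-1:ℝ)^k * c k := by
  match j, hj with
  | 1, _ => simpa using h1 0 le_rfl
  | (n+2), _ =>
    rw [sum_decomp]
    have hA := altSum_nonneg n (fun k => c (k+2))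
      (fun k hk => (h1 (k+2) (by omega)).le) (fun k hk => (h2 (k+2) (by omega)).le)
    have hB := h2 0 (by omega)
    linarith

lemma pair_lt {S : Set ℝ} {h : ℝ → ℝ} (hconv : StrictConvexOn ℝ S h) {a x y b : ℝ}
    (ha : a ∈ S) (hb : b ∈ S) (hax : a < x) (hxy : x ≤ y) (hyb : y < b) (hsum : a + b = x + y) :
    h x + h y < h a + h b := by
  have hab : a < b := lt_of_lt_of_le hax (hxy.trans hyb.le)
  have hba : b - a ≠ 0 := ne_of_gt (by linarith)
  set l := (b - x)/(b - a) with hl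
  have hl0 : 0 < l := div_pos (by linarith) (by linarith)
  have hl1 : l < 1 := by rw [hl, div_lt_one (by linarith)]; linarith
  have hl' : l * b - l * a = b - x := by rw [hl]; field_simp
  have hx : l * a + (1 - l) * b = x := by
    have e : l * a + (1 - l) * b = b - (l * b - l * a) := by ring
    rw [e, hl']; ring
  have hy : (1 - l) * a + l * b = y := by
    have e : (1 - l) * a + l * b = a + (l * b - l * a) := by ring
    rw [e, hl']; linarith
  have h1 := hconv.2 ha hb (ne_of_lt hab) hl0 (by linarith : (0:ℝ) < 1 - l) (by ring)
  have h2 := hconv.2 ha hb (ne_of_lt hab) (by linarith : (0:ℝ) < 1 - l) hl0 (by ring)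
  simp only [smul_eq_mul] at h1 h2
  rw [hx] at h1
  rw [hy] at h2
  linarith

lemma refl_pos (g : ℝ → ℝ) (hc : ContinuousOn g (Icc 0 1))
    (hg : ∀ u ∈ Ioo (0:ℝ) (1/2), g (1-u) < g u) :
    0 < ∫ u in (0:ℝ)..1, g u * Real.cos (π * u) := by
  have hcos : Continuous fun u : ℝ => Real.cos (π * u) := by fun_prop
  have hconthalf : ContinuousOn (fun u : ℝ => g u * Real.cos (π * u)) (Icc 0 1) :=
    hc.mul hcos.continuousOn
  have hsub1 : Icc (0:ℝ) (1/2) ⊆ Icc 0 1 := Icc_subset_Icc le_rfl (by norm_num)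
  have hcg : ContinuousOn (fun u : ℝ => g (1 - u)) (Icc 0 (1/2)) := by
    apply hc.comp (continuous_const.sub continuous_id).continuousOn
    intro x hx
    simp only [mem_Icc] at hx ⊢
    refine ⟨?_, ?_⟩ <;> simp only [Pi.sub_apply, id_eq] <;> linarith [hx.1, hx.2]
  have I1 : IntervalIntegrable (fun u : ℝ => g u * Real.cos (π * u)) volume 0 (1/2) := by
    apply ContinuousOn.intervalIntegrable
    rw [uIcc_of_le (by norm_num : (0:ℝ) ≤ 1/2)]
    exact hconthalf.mono hsub1
  have I2 : IntervalIntegrable (fun u : ℝ => g u * Real.cos (π * u)) volume (1/2) 1 := by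
    apply ContinuousOn.intervalIntegrable
    rw [uIcc_of_le (by norm_num : (1/2:ℝ) ≤ 1)]
    exact hconthalf.mono (Icc_subset_Icc (by norm_num) le_rfl)
  have Ia : IntervalIntegrable (fun u : ℝ => g (1-u) * Real.cos (π * u)) volume 0 (1/2) := by
    apply ContinuousOn.intervalIntegrable
    rw [uIcc_of_le (by norm_num : (0:ℝ) ≤ 1/2)]
    exact hcg.mul hcos.continuousOn
  have hsplit : (∫ u in (0:ℝ)..1, g u * Real.cos (π * u))
      = (∫ u in (0:ℝ)..(1/2), g u * Real.cos (π * u))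
        + ∫ u in (1/2:ℝ)..1, g u * Real.cos (π * u) :=
    (integral_add_adjacent_intervals I1 I2).symm
  have hrefl : (∫ u in (1/2:ℝ)..1, g u * Real.cos (π * u))
      = ∫ u in (0:ℝ)..(1/2), -(g (1-u) * Real.cos (π * u)) := by
    have h0 := intervalIntegral.integral_comp_sub_left
      (fun u : ℝ => g u * Real.cos (π * u)) 1 (a := 0) (b := 1/2)
    norm_num at h0
    rw [← h0]
    apply intervalIntegral.integral_congr
    intro x _
    dsimp only
    have hpi : π * (1 - x) = π - π * x := by ring
    rw [hpi, Real.cos_pi_sub]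
    ring
  have hcomb : (∫ u in (0:ℝ)..1, g u * Real.cos (π * u))
      = ∫ u in (0:ℝ)..(1/2), (g u - g (1-u)) * Real.cos (π * u) := by
    rw [hsplit, hrefl, intervalIntegral.integral_neg, ← sub_eq_add_neg,
      ← intervalIntegral.integral_sub I1 Ia]
    apply intervalIntegral.integral_congr
    intro x _
    dsimp only
    ring
  rw [hcomb]
  apply intervalIntegral_pos_of_pos_on
  · apply ContinuousOn.intervalIntegrable
    rw [uIcc_of_le (by norm_num : (0:ℝ) ≤ 1/2)]
    exact ((hc.mono hsub1).sub hcg).mul hcos.continuousOn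
  · intro x hx
    have h1 : 0 < g x - g (1-x) := sub_pos.mpr (hg x hx)
    have h2 : 0 < Real.cos (π * x) := by
      apply Real.cos_pos_of_mem_Ioo
      constructor
      · nlinarith [Real.pi_pos, hx.1]
      · nlinarith [Real.pi_pos, hx.2]
    positivity
  · norm_num

lemma key_s16 (h : ℝ → ℝ) (j : ℕ) (hj : 1 ≤ j)
    (hc : ContinuousOn h (Icc 0 j)) (hanti : StrictAntiOn h (Icc 0 j))
    (hconv : StrictConvexOn ℝ (Icc 0 (j:ℝ)) h) :
    0 < ∫ s in (0:ℝ)..(j:ℝ), h s * Real.cos (π * s) := by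
  have hcos : Continuous fun u : ℝ => Real.cos (π * u) := by fun_prop
  set c : ℕ → ℝ := fun k => ∫ u in (0:ℝ)..1, h (k + u) * Real.cos (π * u) with hcdef
  have hshift : ∀ d : ℝ, 0 ≤ d → d + 1 ≤ j → ContinuousOn (fun u : ℝ => h (d + u)) (Icc 0 1) := by
    intro d hd0 hd1
    apply hc.comp (continuous_const.add continuous_id).continuousOn
    intro x hx
    simp only [mem_Icc, Pi.add_apply, id_eq] at hx ⊢
    constructor <;> linarith [hx.1, hx.2]
  have hFcont : ContinuousOn (fun s : ℝ => h s * Real.cos (π * s)) (Icc 0 j) :=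
    hc.mul hcos.continuousOn
  have hcast : ∀ k : ℕ, k < j → ((k:ℝ) + 1 ≤ (j:ℝ)) := by
    intro k hk
    have : (k+1:ℕ) ≤ j := hk
    exact_mod_cast this
  have hint : ∀ k : ℕ, k < j →
      IntervalIntegrable (fun s : ℝ => h s * Real.cos (π * s)) volume (k:ℝ) ((k:ℝ)+1) := by
    intro k hk
    apply ContinuousOn.intervalIntegrable
    rw [uIcc_of_le (by linarith : (k:ℝ) ≤ (k:ℝ)+1)]
    exact hFcont.mono (Icc_subset_Icc (by positivity) (hcast k hk))
  -- each unit-interval integral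
  have hstep : ∀ k : ℕ, k < j →
      (∫ s in ((k:ℝ))..((k:ℝ)+1), h s * Real.cos (π * s)) = (-1:ℝ)^k * c k := by
    intro k hk
    have h0 := intervalIntegral.integral_comp_add_left
      (fun s : ℝ => h s * Real.cos (π * s)) (k:ℝ) (a := 0) (b := 1)
    rw [add_zero] at h0
    rw [← h0, hcdef]
    dsimp only
    rw [← intervalIntegral.integral_const_mul]
    apply intervalIntegral.integral_congr
    intro x _
    dsimp only
    have e : π * ((k:ℝ) + x) = π * x + (k:ℝ) * π := by ring
    rw [e, Real.cos_add_nat_mul_pi]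
    ring
  -- positivity of c k
  have hcpos : ∀ k : ℕ, k + 1 ≤ j → 0 < c k := by
    intro k hk
    apply refl_pos (fun u => h ((k:ℝ) + u)) (hshift (k:ℝ) (by positivity) (hcast k hk))
    intro u hu
    obtain ⟨hu0, hu2⟩ := hu
    have h1 : (k:ℝ) + u ∈ Icc (0:ℝ) (j:ℝ) :=
      ⟨by positivity, by linarith [hcast k hk]⟩
    have h2 : (k:ℝ) + (1-u) ∈ Icc (0:ℝ) (j:ℝ) :=
      ⟨by linarith [Nat.cast_nonneg (α := ℝ) k], by linarith [hcast k hk]⟩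
    exact hanti h1 h2 (by linarith)
  -- strict decrease of c
  have hcdec : ∀ k : ℕ, k + 2 ≤ j → c (k+1) < c k := by
    intro k hk
    have hk1 : (k:ℝ) + 2 ≤ (j:ℝ) := by exact_mod_cast hk
    have Ik : IntervalIntegrable (fun u : ℝ => h ((k:ℝ)+u) * Real.cos (π * u)) volume 0 1 := by
      apply ContinuousOn.intervalIntegrable
      rw [uIcc_of_le (by norm_num : (0:ℝ) ≤ 1)]
      exact ((hshift (k:ℝ) (by positivity) (by linarith)).mul hcos.continuousOn)
    have Ik1 : IntervalIntegrable (fun u : ℝ => h ((k:ℝ)+1+u) * Real.cos (π * u)) volume 0 1 := by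
      apply ContinuousOn.intervalIntegrable
      rw [uIcc_of_le (by norm_num : (0:ℝ) ≤ 1)]
      exact ((hshift ((k:ℝ)+1) (by positivity) (by linarith)).mul hcos.continuousOn)
    have hdiff : c k - c (k+1)
        = ∫ u in (0:ℝ)..1, (h ((k:ℝ)+u) - h ((k:ℝ)+1+u)) * Real.cos (π * u) := by
      rw [hcdef]
      dsimp only
      simp only [Nat.cast_add, Nat.cast_one]
      rw [← intervalIntegral.integral_sub Ik Ik1]
      apply intervalIntegral.integral_congr
      intro x _
      dsimp only
      ring
    have hpos : 0 < ∫ u in (0:ℝ)..1, (h ((k:ℝ)+u) - h ((k:ℝ)+1+u)) * Real.cos (π * u) := by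
      apply refl_pos (fun u => h ((k:ℝ)+u) - h ((k:ℝ)+1+u))
      · exact (hshift (k:ℝ) (by positivity) (by linarith)).sub
          (hshift ((k:ℝ)+1) (by positivity) (by linarith))
      · intro u hu
        obtain ⟨hu0, hu2⟩ := hu
        have hk0 : (0:ℝ) ≤ (k:ℝ) := Nat.cast_nonneg k
        have hp := pair_lt hconv (a := (k:ℝ)+u) (x := (k:ℝ)+1-u) (y := (k:ℝ)+1+u)
          (b := (k:ℝ)+2-u)
          (⟨by positivity, by linarith⟩ : (k:ℝ)+u ∈ Icc (0:ℝ) (j:ℝ))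
          (⟨by linarith, by linarith⟩ : (k:ℝ)+2-u ∈ Icc (0:ℝ) (j:ℝ))
          (by linarith) (by linarith) (by linarith) (by ring)
        have e1 : (k:ℝ) + (1-u) = (k:ℝ)+1-u := by ring
        have e2 : (k:ℝ) + 1 + (1-u) = (k:ℝ)+2-u := by ring
        rw [e1, e2]
        linarith
    linarith [hdiff, hpos]
  -- put it together
  have hadj : ∀ k < j, IntervalIntegrable (fun s : ℝ => h s * Real.cos (π * s)) volume
      ((fun k : ℕ => (k:ℝ)) k) ((fun k : ℕ => (k:ℝ)) (k+1)) := by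
    intro k hk
    have := hint k hk
    dsimp only
    rwa [show (((k+1:ℕ)):ℝ) = (k:ℝ)+1 by push_cast; ring]
  have hsum := intervalIntegral.sum_integral_adjacent_intervals
    (f := fun s : ℝ => h s * Real.cos (π * s)) (μ := volume) (a := fun k : ℕ => (k:ℝ)) (n := j)
    hadj
  simp only [Nat.cast_zero] at hsum
  rw [← hsum]
  have : ∀ k ∈ Finset.range j, (∫ s in (((k:ℕ)):ℝ)..((((k+1:ℕ)):ℝ)), h s * Real.cos (π * s))
      = (-1:ℝ)^k * c k := by
    intro k hk
    rw [show (((k+1:ℕ)):ℝ) = (k:ℝ)+1 by push_cast; ring]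
    exact hstep k (Finset.mem_range.mp hk)
  rw [Finset.sum_congr rfl this]
  exact altSum_pos j hj c (fun k hk => hcpos k hk) (fun k hk => hcdec k hk)

theorem stmt16 (α T ρ : ℝ) (hα : 0 < α) (hT : 0 < T) (hρ0 : 0 < ρ) (hρ1 : ρ ≤ 1) :
    0 < (1 / (2 * T)) * ∫ t in (-T)..T, Real.exp (-α * |t| ^ ρ) ∧
    ∀ j : ℕ, 1 ≤ j →
      0 < (1 / T) * ∫ t in (-T)..T,
        Real.exp (-α * |t| ^ ρ) * Real.cos (π * j * t / T) := by
  have habs : Continuous fun t : ℝ => |t| ^ ρ := by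
    rw [continuous_iff_continuousAt]; intro t
    exact (Real.continuousAt_rpow_const _ _ (Or.inr hρ0.le)).comp continuous_abs.continuousAt
  have hγ : Continuous fun t : ℝ => Real.exp (-α * |t| ^ ρ) :=
    Real.continuous_exp.comp (continuous_const.mul habs)
  constructor
  · have hI : 0 < ∫ t in (-T)..T, Real.exp (-α * |t| ^ ρ) := by
      apply intervalIntegral_pos_of_pos (hγ.intervalIntegrable _ _)
      · intro x; exact Real.exp_pos _
      · linarith
    have : 0 < 1 / (2 * T) := by positivity
    exact mul_pos this hI
  · intro j hj
    have hjR : (0:ℝ) < (j:ℝ) := by exact_mod_cast hj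
    set G : ℝ → ℝ := fun t => Real.exp (-α * |t| ^ ρ) * Real.cos (π * j * t / T) with hGdef
    have hGcont : Continuous G := hγ.mul (by fun_prop)
    have heven : ∀ t, G (-t) = G t := by
      intro t
      rw [hGdef]
      dsimp only
      rw [abs_neg, show π * j * (-t) / T = -(π * j * t / T) by ring, Real.cos_neg]
    -- reduce to [0, T]
    have i1 : IntervalIntegrable G volume (-T) 0 := hGcont.intervalIntegrable _ _
    have i2 : IntervalIntegrable G volume 0 T := hGcont.intervalIntegrable _ _
    have step1 : (∫ t in (-T)..T, G t) = 2 * ∫ t in (0:ℝ)..T, G t := by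
      rw [← intervalIntegral.integral_add_adjacent_intervals i1 i2]
      have e := intervalIntegral.integral_comp_neg (f := G) (a := 0) (b := T)
      have e2 : (∫ x in (0:ℝ)..T, G (-x)) = ∫ x in (0:ℝ)..T, G x :=
        intervalIntegral.integral_congr (fun x _ => heven x)
      rw [e2, neg_zero] at e
      rw [← e]; ring
    -- drop the absolute value
    set F : ℝ → ℝ := fun t => Real.exp (-α * t ^ ρ) * Real.cos (π * j * t / T) with hFdef
    have step2 : (∫ t in (0:ℝ)..T, G t) = ∫ t in (0:ℝ)..T, F t := by
      apply intervalIntegral.integral_congr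
      intro t ht
      rw [uIcc_of_le hT.le] at ht
      rw [hGdef, hFdef]
      dsimp only
      rw [abs_of_nonneg ht.1]
    -- substitution t = (T/j) s
    set m : ℝ := T / (j:ℝ) with hmdef
    have hm : 0 < m := by positivity
    set h : ℝ → ℝ := fun s => Real.exp (-α * (m * s) ^ ρ) with hhdef
    have step3 : (∫ t in (0:ℝ)..T, F t) = m * ∫ s in (0:ℝ)..(j:ℝ), h s * Real.cos (π * s) := by
      have hsm := intervalIntegral.smul_integral_comp_mul_left (f := F) (a := 0) (b := (j:ℝ)) m
      rw [mul_zero, show m * (j:ℝ) = T by rw [hmdef]; field_simp] at hsm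
      rw [← hsm, smul_eq_mul]
      congr 1
      apply intervalIntegral.integral_congr
      intro s _
      rw [hFdef, hhdef]
      dsimp only
      congr 1
      rw [show π * j * (m * s) / T = π * s * ((j * m) / T) by ring,
        show (j:ℝ) * m = T by rw [hmdef]; field_simp]
      field_simp
    -- verify the hypotheses of `key`
    have hrpow : Continuous fun s : ℝ => (m * s) ^ ρ := by
      rw [continuous_iff_continuousAt]; intro t
      exact (Real.continuousAt_rpow_const _ _ (Or.inr hρ0.le)).comp
        (continuous_const.mul continuous_id).continuousAt
    have hhc : ContinuousOn h (Icc 0 (j:ℝ)) :=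
      (Real.continuous_exp.comp (continuous_const.mul hrpow)).continuousOn
    have hhanti : StrictAntiOn h (Icc 0 (j:ℝ)) := by
      intro x hx y hy hxy
      have hx0 : (0:ℝ) ≤ x := hx.1
      rw [hhdef]
      dsimp only
      apply Real.exp_lt_exp.mpr
      have h1 : (m * x) ^ ρ < (m * y) ^ ρ :=
        Real.rpow_lt_rpow (by positivity) (by nlinarith) hρ0
      nlinarith
    have hhconv : StrictConvexOn ℝ (Icc 0 (j:ℝ)) h := by
      have hψ := Real.concaveOn_rpow hρ0.le hρ1
      refine ⟨convex_Icc 0 (j:ℝ), fun x hx y hy hxy a b ha hb hab => ?_⟩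
      have hX : m * x ∈ Ici (0:ℝ) := by
        simp only [mem_Ici]; have := hx.1; positivity
      have hY : m * y ∈ Ici (0:ℝ) := by
        simp only [mem_Ici]; have := hy.1; positivity
      have hXY : m * x ≠ m * y := fun e => hxy (mul_left_cancel₀ hm.ne' e)
      have hcc := hψ.2 hX hY ha.le hb.le hab
      simp only [smul_eq_mul] at hcc ⊢
      have h1 : -α * (a * (m*x) + b * (m*y)) ^ ρ
          ≤ a * (-α * (m*x) ^ ρ) + b * (-α * (m*y) ^ ρ) := by nlinarith [hα.le]
      have hne : -α * (m*x) ^ ρ ≠ -α * (m*y) ^ ρ := by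
        have hne' : (m*x) ^ ρ ≠ (m*y) ^ ρ := by
          rcases lt_or_gt_of_ne hXY with hlt | hlt
          · exact ne_of_lt (Real.rpow_lt_rpow hX hlt hρ0)
          · exact (ne_of_lt (Real.rpow_lt_rpow hY hlt hρ0)).symm
        intro e
        exact hne' (mul_left_cancel₀ (neg_ne_zero.mpr hα.ne') e)
      have h2 := strictConvexOn_exp.2 (mem_univ (-α * (m*x) ^ ρ)) (mem_univ (-α * (m*y) ^ ρ))
        hne ha hb hab
      simp only [smul_eq_mul] at h2
      calc h (a * x + b * y) = Real.exp (-α * (a * (m*x) + b * (m*y)) ^ ρ) := by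
            rw [hhdef]; dsimp only; rw [show m * (a*x+b*y) = a*(m*x)+b*(m*y) by ring]
        _ ≤ Real.exp (a * (-α * (m*x)^ρ) + b * (-α * (m*y)^ρ)) := Real.exp_le_exp.mpr h1
        _ < a * Real.exp (-α * (m*x)^ρ) + b * Real.exp (-α * (m*y)^ρ) := h2
        _ = a * h x + b * h y := by rw [hhdef]
    have hkey := key_s16 h j hj hhc hhanti hhconv
    rw [step1, step2, step3]
    have : 0 < 1 / T := by positivity
    positivity
end
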